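/- Let G be a directed acyclic graph on {1,…,n} with CTLN weight matrix W (parameters δ > 0, 0 < ε < δ/(1+δ), θ > 0), let σ ⊆ {1,…,n} be nonempty, let A_σ be the adjacency matrix of the induced subgraph G|_σ (indexed by σ, with (A_σ)_{ij} = 1 iff j→i in G|_σ), and let p_j^{G|σ}(z) = Σ_{k≥0} z^k·(A_σ^k𝟙)_j for j ∈ σ. Set β = −(ε+δ)/δ, assume −δ + (1+δ)·Σ_{j∈σ} p_j^{G|σ}(β) ≠ 0, and set Γ(σ) = θ/(−δ + (1+δ)·Σ_{j∈σ} p_j^{G|σ}(β)). Then the vector x* ∈ ℝ^n with x*_j = p_j^{G|σ}(β)·Γ(σ) for j ∈ σ and x*_j = 0 for j ∉ σ satisfies −x*_i + Σ_{j=1}^n W_{ij}·x*_j + θ = 0 for every i ∈ σ; i.e., x* is the fixed point of the linear system L_σ of the CTLN. -/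

import Mathlib

/-- A chain of `R`-steps along `g` yields a `TransGen`. -/
private lemma chain_transGen {m : Type*} {R : m → m → Prop} (g : ℕ → m) (k : ℕ)
    (hg : ∀ l < k, R (g l) (g (l + 1))) :
    ∀ b ≤ k, ∀ a < b, Relation.TransGen R (g a) (g b) := by
  intro b
  induction b with
  | zero => intro _ a ha; omega
  | succ b ih =>
    intro hb a ha
    rcases Nat.lt_succ_iff_lt_or_eq.mp ha with h | h
    · exact (ih (by omega) a h).tail (hg b (by omega))
    · subst h; exact Relation.TransGen.single (hg a (by omega))

/-- A nonzero entry of `A ^ k` yields a path of length `k`. -/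
private lemma pow_ne_zero_path {m : Type*} [Fintype m] [DecidableEq m]
    (R : m → m → Prop) [DecidableRel R]
    (A : Matrix m m ℝ) (hA : ∀ i j, A i j = if R j i then 1 else 0) :
    ∀ k (i j : m), (A ^ k) i j ≠ 0 →
      ∃ g : ℕ → m, g 0 = j ∧ g k = i ∧ ∀ l < k, R (g l) (g (l + 1)) := by
  intro k
  induction k with
  | zero =>
    intro i j h
    have hij : i = j := by
      by_contra hne
      exact h (by simp [Matrix.one_apply_ne hne])
    exact ⟨fun _ => j, rfl, hij.symm, fun l hl => absurd hl (by omega)⟩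
  | succ k ih =>
    intro i j h
    rw [pow_succ', Matrix.mul_apply] at h
    obtain ⟨c, _, hc⟩ := Finset.exists_ne_zero_of_sum_ne_zero h
    have h1 : A i c ≠ 0 := fun h0 => hc (by rw [h0, zero_mul])
    have h2 : (A ^ k) c j ≠ 0 := fun h0 => hc (by rw [h0, mul_zero])
    have hR : R c i := by
      by_contra hr
      exact h1 (by rw [hA, if_neg hr])
    obtain ⟨g, hg0, hgk, hgs⟩ := ih c j h2
    refine ⟨fun l => if l ≤ k then g l else i, by simp [hg0], by simp, ?_⟩
    intro l hl
    rcases Nat.lt_succ_iff_lt_or_eq.mp hl with h' | h'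
    · simpa [Nat.le_of_lt h', Nat.succ_le_of_lt h'] using hgs l h'
    · subst h'; simpa [hgk] using hR

/-- A matrix supported on an acyclic relation is nilpotent. -/
private lemma adj_pow_eq_zero {m : Type*} [Fintype m] [DecidableEq m]
    (R : m → m → Prop) [DecidableRel R]
    (A : Matrix m m ℝ) (hA : ∀ i j, A i j = if R j i then 1 else 0)
    (hR : ∀ i, ¬ Relation.TransGen R i i) {k : ℕ} (hk : Fintype.card m ≤ k) :
    A ^ k = 0 := by
  have hcard : A ^ Fintype.card m = 0 := by
    ext i j
    by_contra h
    obtain ⟨g, _, _, hgs⟩ := pow_ne_zero_path R A hA (Fintype.card m) i j h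
    have hlt : Fintype.card m < Fintype.card (Fin (Fintype.card m + 1)) := by simp
    obtain ⟨a, b, hab, heq⟩ :=
      Fintype.exists_ne_map_eq_of_card_lt (fun l : Fin (Fintype.card m + 1) => g l) hlt
    have hne : (a : ℕ) ≠ (b : ℕ) := fun h' => hab (Fin.ext h')
    rcases Nat.lt_or_gt_of_ne hne with h' | h'
    · have ht := chain_transGen g _ hgs b (Nat.lt_succ_iff.mp b.isLt) a h'
      rw [heq] at ht
      exact hR _ ht
    · have ht := chain_transGen g _ hgs a (Nat.lt_succ_iff.mp a.isLt) b h'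
      rw [← heq] at ht
      exact hR _ ht
  have : A ^ k = A ^ Fintype.card m * A ^ (k - Fintype.card m) := by
    rw [← pow_add]; congr 1; omega
  rw [this, hcard, Matrix.zero_mul]

/-- The fixed point of the linear system `L_σ` of a DAG CTLN, expressed via the
localized path polynomials of the induced subgraph `G|_σ` evaluated at `β = −(ε+δ)/δ`. -/
theorem stmt_11 (n : ℕ) (E : Fin n → Fin n → Prop) [DecidableRel E]
    (hacyc : ∀ i, ¬ Relation.TransGen E i i)
    (δ ε θ : ℝ) (hδ : 0 < δ) (hε : 0 < ε) (hεδ : ε < δ / (1 + δ)) (hθ : 0 < θ)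
    (W : Matrix (Fin n) (Fin n) ℝ)
    (hW : ∀ i j, W i j = if i = j then 0 else if E j i then -1 + ε else -1 - δ)
    (σ : Finset (Fin n)) (hσ : σ.Nonempty)
    (Aσ : Matrix {i // i ∈ σ} {i // i ∈ σ} ℝ)
    (hAσ : ∀ i j : {i // i ∈ σ}, Aσ i j = if E (j : Fin n) (i : Fin n) then 1 else 0)
    (β : ℝ) (hβ : β = -(ε + δ) / δ)
    (p : {i // i ∈ σ} → ℝ)
    (hp : p = ∑ k ∈ Finset.range n, β ^ k • (Aσ ^ k).mulVec (fun _ => (1 : ℝ)))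
    (hden : -δ + (1 + δ) * ∑ j, p j ≠ 0)
    (Γ : ℝ) (hΓ : Γ = θ / (-δ + (1 + δ) * ∑ j, p j))
    (x : Fin n → ℝ)
    (hx : ∀ j : Fin n, x j = if h : j ∈ σ then p ⟨j, h⟩ * Γ else 0) :
    ∀ i ∈ σ, -x i + (∑ j, W i j * x j) + θ = 0 := by
  classical
  have hRacyc : ∀ i : {i // i ∈ σ},
      ¬ Relation.TransGen (fun a b : {i // i ∈ σ} => E (a : Fin n) (b : Fin n)) i i := by
    intro i hi
    exact hacyc i (hi.lift Subtype.val (fun a b h => h))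
  have hnil : Aσ ^ n = 0 := by
    refine adj_pow_eq_zero (fun a b : {i // i ∈ σ} => E (a : Fin n) (b : Fin n)) Aσ
      (fun i j => hAσ i j) hRacyc ?_
    calc Fintype.card {i // i ∈ σ} = σ.card := Fintype.card_coe σ
      _ ≤ Fintype.card (Fin n) := Finset.card_le_univ σ
      _ = n := Fintype.card_fin n
  -- recursion p = 1 + β • Aσ *ᵥ p
  have key : (fun _ => (1 : ℝ)) + β • Aσ.mulVec p = p := by
    have hmv : Aσ.mulVec p
        = ∑ k ∈ Finset.range n, β ^ k • (Aσ ^ (k + 1)).mulVec (fun _ => (1 : ℝ)) := by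
      rw [hp]
      rw [show Aσ.mulVec (∑ k ∈ Finset.range n, β ^ k • (Aσ ^ k).mulVec fun _ => (1:ℝ))
          = Aσ.mulVecLin (∑ k ∈ Finset.range n, β ^ k • (Aσ ^ k).mulVec fun _ => (1:ℝ)) from rfl]
      rw [map_sum]
      refine Finset.sum_congr rfl fun k _ => ?_
      rw [map_smul]
      congr 1
      show Aσ.mulVec ((Aσ ^ k).mulVec fun _ => (1:ℝ)) = _
      rw [Matrix.mulVec_mulVec, ← pow_succ']
    have hsucc' : ∑ k ∈ Finset.range (n + 1), β ^ k • (Aσ ^ k).mulVec (fun _ => (1:ℝ))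
        = (∑ k ∈ Finset.range n, β ^ (k + 1) • (Aσ ^ (k + 1)).mulVec (fun _ => (1:ℝ)))
          + (fun _ => (1:ℝ)) := by
      rw [Finset.sum_range_succ' (fun k => β ^ k • (Aσ ^ k).mulVec fun _ => (1:ℝ)) n]
      congr 1
      simp [Matrix.one_mulVec]
    have hsucc : ∑ k ∈ Finset.range (n + 1), β ^ k • (Aσ ^ k).mulVec (fun _ => (1:ℝ)) = p := by
      rw [Finset.sum_range_succ, hnil, hp]; simp
    rw [hmv, Finset.smul_sum]
    have hee : ∀ k, β • β ^ k • (Aσ ^ (k + 1)).mulVec (fun _ => (1:ℝ))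
        = β ^ (k + 1) • (Aσ ^ (k + 1)).mulVec (fun _ => (1:ℝ)) := by
      intro k; rw [smul_smul, ← pow_succ']
    simp_rw [hee]
    rw [add_comm]
    rw [← hsucc, hsucc']
  intro i hi
  have hEii : ¬ E i i := fun h => hacyc i (Relation.TransGen.single h)
  have hrec : β * (Aσ.mulVec p ⟨i, hi⟩) = p ⟨i, hi⟩ - 1 := by
    have := congrFun key ⟨i, hi⟩
    simp only [Pi.add_apply, Pi.smul_apply, smul_eq_mul] at this
    linarith
  have hxi : x i = p ⟨i, hi⟩ * Γ := by rw [hx]; rw [dif_pos hi]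
  have hsum1 : ∑ j, W i j * x j = ∑ j ∈ σ, W i j * x j := by
    refine (Finset.sum_subset (Finset.subset_univ σ) fun j _ hj => ?_).symm
    rw [hx, dif_neg hj, mul_zero]
  have hsum2 : ∑ j ∈ σ, W i j * x j = ∑ j : {i // i ∈ σ}, W i (j : Fin n) * x (j : Fin n) :=
    (Finset.sum_coe_sort σ (fun j => W i j * x j)).symm
  have hterm : ∀ j : {i // i ∈ σ}, W i (j : Fin n) * x (j : Fin n)
      = (if j = ⟨i, hi⟩ then (1 + δ) * (p j * Γ) else 0)
        + (-1 - δ) * p j * Γ + ((ε + δ) * Γ) * (Aσ ⟨i, hi⟩ j * p j) := by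
    intro j
    have hxj : x (j : Fin n) = p j * Γ := by
      rw [hx, dif_pos j.2]
    rw [hxj, hW, hAσ]
    by_cases hji : i = (j : Fin n)
    · have hj : j = (⟨i, hi⟩ : {x // x ∈ σ}) := Subtype.ext hji.symm
      have hnE : ¬ E (j : Fin n) i := by rw [hji] at hEii ⊢; exact hEii
      rw [if_pos hji, if_pos hj, if_neg (show ¬ E (j : Fin n) ((⟨i, hi⟩ : {x // x ∈ σ}) : Fin n)
        from hnE)]
      ring
    · have hj' : j ≠ (⟨i, hi⟩ : {x // x ∈ σ}) := fun h => hji (congrArg Subtype.val h).symm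
      rw [if_neg hji, if_neg hj']
      by_cases hE : E (j : Fin n) i
      · rw [if_pos hE, if_pos hE]; ring
      · rw [if_neg hE, if_neg hE]; ring
  have hmvi : Aσ.mulVec p ⟨i, hi⟩ = ∑ j : {i // i ∈ σ}, Aσ ⟨i, hi⟩ j * p j := rfl
  have hsum3 : ∑ j : {i // i ∈ σ}, W i (j : Fin n) * x (j : Fin n)
      = (1 + δ) * (p ⟨i, hi⟩ * Γ) + ((-1 - δ) * ∑ j, p j) * Γ
        + ((ε + δ) * Γ) * (Aσ.mulVec p ⟨i, hi⟩) := by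
    simp_rw [hterm]
    rw [Finset.sum_add_distrib, Finset.sum_add_distrib]
    congr 1
    · congr 1
      · rw [Finset.sum_ite_eq' Finset.univ (⟨i, hi⟩ : {x // x ∈ σ})
          (fun j => (1 + δ) * (p j * Γ))]
        simp
      · rw [← Finset.sum_mul, ← Finset.mul_sum]
    · rw [hmvi, Finset.mul_sum]
  have hβδ : β * δ = -(ε + δ) := by
    rw [hβ]; field_simp
  have hθ' : Γ * (-δ + (1 + δ) * ∑ j, p j) = θ := by
    rw [hΓ]; exact div_mul_cancel₀ θ hden
  have hεδ' : (ε + δ) * (Aσ.mulVec p ⟨i, hi⟩) = -δ * (p ⟨i, hi⟩ - 1) := by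
    have h1 : (ε + δ) * (Aσ.mulVec p ⟨i, hi⟩)
        = -δ * (β * (Aσ.mulVec p ⟨i, hi⟩)) := by
      linear_combination (Aσ.mulVec p ⟨i, hi⟩) * hβδ
    rw [h1, hrec]
  rw [hsum1, hsum2, hsum3, hxi]
  linear_combination Γ * hεδ' - hθ'
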